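/- Ratio of hyperbolic Cauchy determinants at doubled argument: for complex numbers λ₁,…,λ_N, z₁,…,z_N such that sinh(z_k−λ_j) ≠ 0 and cosh(z_k−λ_j) ≠ 0 for all j,k, the λ's pairwise distinct mod iπ/2 and the z's pairwise distinct mod iπ/2, one has det_N[1/sinh(2(z_k−λ_j))] / det_N[1/sinh(z_k−λ_j)] = 2^{−N} · ∏_{a>b} cosh(z_a−z_b)·cosh(λ_a−λ_b) / ∏_{a,b} cosh(z_a−λ_b). -/

import Mathlib

open Matrix Finset

section helpers
private lemma exp2_sub (x y : ℂ) :
    Complex.exp (2*x) - Complex.exp (2*y)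
      = 2 * Complex.exp x * Complex.exp y * Complex.sinh (x - y) := by
  rw [Complex.sinh, Complex.exp_sub, neg_sub, Complex.exp_sub, two_mul, two_mul,
    Complex.exp_add, Complex.exp_add]
  have h1 := Complex.exp_ne_zero x
  have h2 := Complex.exp_ne_zero y
  field_simp

private lemma exp2_add (x y : ℂ) :
    Complex.exp (2*x) + Complex.exp (2*y)
      = 2 * Complex.exp x * Complex.exp y * Complex.cosh (x - y) := by
  rw [Complex.cosh, Complex.exp_sub, neg_sub, Complex.exp_sub, two_mul, two_mul,
    Complex.exp_add, Complex.exp_add]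
  have h1 := Complex.exp_ne_zero x
  have h2 := Complex.exp_ne_zero y
  field_simp

private lemma prod_pair : ∀ (N : ℕ) (g : Fin N → ℂ),
    (∏ a, ∏ b ∈ Iio a, (g a * g b)) = (∏ a, g a) ^ (N - 1) := by
  intro N
  induction N with
  | zero => intro g; simp
  | succ n ih =>
    intro g
    rw [Fin.prod_univ_castSucc]
    simp only [Fin.Iio_castSucc, Fin.Iio_last_eq_map, Finset.prod_map,
      Fin.coe_castSuccEmb]
    rw [ih (fun i => g i.castSucc)]
    rw [Fin.prod_univ_castSucc (f := g)]
    simp only [Finset.prod_mul_distrib, Finset.prod_const, Finset.card_univ,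
      Fintype.card_fin]
    cases n with
    | zero => simp
    | succ m =>
      simp only [Nat.add_sub_cancel]
      ring
private lemma cauchy_det :
    ∀ (n : ℕ) (u v : Fin n → ℂ), (∀ i k, v k - u i ≠ 0) →
      Matrix.det (Matrix.of fun i k : Fin n => (v k - u i)⁻¹)
        = (∏ a, ∏ b ∈ Iio a, ((v a - v b) * (u b - u a)))
          / (∏ i, ∏ k, (v k - u i)) := by
  intro n
  induction n with
  | zero => intro u v h; simp
  | succ n ih =>
    intro u v h
    set L : Fin (n+1) := Fin.last n with hL
    -- Step 1: row operations
    have h1 : Matrix.det (Matrix.of fun i k : Fin (n+1) => (v k - u i)⁻¹)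
        = Matrix.det (Matrix.of fun i k : Fin (n+1) =>
            if i = L then (v k - u L)⁻¹
            else (u i - u L) * ((v k - u i)⁻¹ * (v k - u L)⁻¹)) := by
      apply det_eq_of_forall_row_eq_smul_add_const
        (fun i => if i = L then 0 else 1) L (by simp)
      intro i k
      by_cases hi : i = L
      · subst hi; simp
      · simp only [of_apply, hi, if_false, if_pos rfl, ↓reduceIte, one_mul]
        have ha := h i k; have hb := h L k
        field_simp
        ring
    -- Step 2/3: factor columns and rows
    have h2 : (Matrix.of fun i k : Fin (n+1) =>
            if i = L then (v k - u L)⁻¹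
            else (u i - u L) * ((v k - u i)⁻¹ * (v k - u L)⁻¹))
        = Matrix.of fun i k : Fin (n+1) => (v k - u L)⁻¹ *
            ((Matrix.of fun i k : Fin (n+1) =>
              (if i = L then 1 else (u i - u L)) *
                ((Matrix.of fun i k : Fin (n+1) =>
                  if i = L then 1 else (v k - u i)⁻¹) i k)) i k) := by
      ext i k
      by_cases hi : i = L <;> simp [hi] <;> ring
    -- Step 4: column operations
    have h4 : Matrix.det (Matrix.of fun i k : Fin (n+1) =>
            if i = L then 1 else (v k - u i)⁻¹)
        = Matrix.det (Matrix.of fun i k : Fin (n+1) =>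
            if i = L then (if k = L then 1 else 0)
            else if k = L then (v L - u i)⁻¹
            else (v L - v k) * ((v k - u i)⁻¹ * (v L - u i)⁻¹)) := by
      rw [← Matrix.det_transpose, ← Matrix.det_transpose (Matrix.of fun i k : Fin (n+1) =>
            if i = L then (if k = L then 1 else 0)
            else if k = L then (v L - u i)⁻¹
            else (v L - v k) * ((v k - u i)⁻¹ * (v L - u i)⁻¹))]
      apply det_eq_of_forall_row_eq_smul_add_const
        (fun k => if k = L then 0 else 1) L (by simp)
      intro k i
      simp only [transpose_apply, of_apply]
      by_cases hk : k = L
      · subst hk; by_cases hi : i = L <;> simp [hi]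
      · by_cases hi : i = L
        · simp [hi, hk]
        · simp only [hi, hk, if_false, ↓reduceIte, one_mul]
          have ha := h i k; have hb := h i L
          field_simp
          ring
    -- Step 5: Laplace expansion along the last row
    have h5 : Matrix.det (Matrix.of fun i k : Fin (n+1) =>
            if i = L then (if k = L then 1 else 0)
            else if k = L then (v L - u i)⁻¹
            else (v L - v k) * ((v k - u i)⁻¹ * (v L - u i)⁻¹))
        = Matrix.det ((Matrix.of fun i k : Fin (n+1) =>
            if i = L then (if k = L then 1 else 0)
            else if k = L then (v L - u i)⁻¹
            else (v L - v k) * ((v k - u i)⁻¹ * (v L - u i)⁻¹)).submatrix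
              Fin.castSucc Fin.castSucc) := by
      rw [Matrix.det_succ_row _ L, Finset.sum_eq_single L]
      · rw [Fin.succAbove_last]
        have h0 : ((-1 : ℂ)) ^ ((L : ℕ) + (L : ℕ)) = 1 := Even.neg_one_pow ⟨(L : ℕ), rfl⟩
        simp [h0]
      · intro j _ hj
        simp [hj]
      · simp
    -- Step 6: compute the submatrix determinant via ih
    have h6 : ((Matrix.of fun i k : Fin (n+1) =>
            if i = L then (if k = L then 1 else 0)
            else if k = L then (v L - u i)⁻¹
            else (v L - v k) * ((v k - u i)⁻¹ * (v L - u i)⁻¹)).submatrix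
              Fin.castSucc Fin.castSucc)
        = Matrix.of fun i k : Fin n => (v L - v k.castSucc) *
            ((Matrix.of fun i k : Fin n => (v L - u i.castSucc)⁻¹ *
              ((Matrix.of fun i k : Fin n =>
                (v k.castSucc - u i.castSucc)⁻¹) i k)) i k) := by
      ext i k
      simp only [hL, Matrix.submatrix_apply, Matrix.of_apply,
        if_neg (Fin.castSucc_lt_last i).ne, if_neg (Fin.castSucc_lt_last k).ne]
      ring
    have hih : Matrix.det (Matrix.of fun i k : Fin n =>
          (v k.castSucc - u i.castSucc)⁻¹)
        = (∏ a : Fin n, ∏ b ∈ Iio a,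
              ((v a.castSucc - v b.castSucc) * (u b.castSucc - u a.castSucc)))
          / (∏ i : Fin n, ∏ k : Fin n, (v k.castSucc - u i.castSucc)) :=
      ih (fun i => u i.castSucc) (fun k => v k.castSucc) (fun i k => h _ _)
    rw [h1, h2, Matrix.det_mul_row, Matrix.det_mul_column, h4, h5, h6,
      Matrix.det_mul_row, Matrix.det_mul_column, hih]
    -- Now pure algebra
    have hNum : (∏ a : Fin (n+1), ∏ b ∈ Iio a, ((v a - v b) * (u b - u a)))
        = (∏ a : Fin n, ∏ b ∈ Iio a,
            ((v a.castSucc - v b.castSucc) * (u b.castSucc - u a.castSucc)))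
          * ((∏ b : Fin n, (v L - v b.castSucc))
              * ∏ b : Fin n, (u b.castSucc - u L)) := by
      rw [Fin.prod_univ_castSucc]
      simp only [Fin.Iio_castSucc, Fin.Iio_last_eq_map, Finset.prod_map,
        Fin.coe_castSuccEmb, Finset.prod_mul_distrib]
      rfl
    have hDen : (∏ i : Fin (n+1), ∏ k : Fin (n+1), (v k - u i))
        = ((∏ i : Fin n, ∏ k : Fin n, (v k.castSucc - u i.castSucc))
            * ∏ i : Fin n, (v L - u i.castSucc))
          * ∏ k : Fin (n+1), (v k - u L) := by
      rw [Fin.prod_univ_castSucc]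
      congr 1
      rw [← Finset.prod_mul_distrib]
      exact Finset.prod_congr rfl fun i _ => by rw [Fin.prod_univ_castSucc]
    have hr : (∏ i : Fin (n+1), if i = L then (1:ℂ) else (u i - u L))
        = ∏ i : Fin n, (u i.castSucc - u L) := by
      rw [Fin.prod_univ_castSucc]
      simp only [hL, eq_self_iff_true, if_true, ↓reduceIte, mul_one]
      exact Finset.prod_congr rfl fun i _ => if_neg (Fin.castSucc_lt_last i).ne
    rw [hNum, hDen, hr]
    have hA : (∏ i : Fin n, ∏ k : Fin n, (v k.castSucc - u i.castSucc)) ≠ 0 :=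
      Finset.prod_ne_zero_iff.mpr fun i _ =>
        Finset.prod_ne_zero_iff.mpr fun k _ => h _ _
    have hB : (∏ i : Fin n, (v L - u i.castSucc)) ≠ 0 :=
      Finset.prod_ne_zero_iff.mpr fun i _ => h _ _
    have hC : (∏ k : Fin (n+1), (v k - u L)) ≠ 0 :=
      Finset.prod_ne_zero_iff.mpr fun k _ => h _ _
    rw [show (∏ i : Fin (n+1), (v i - u L)⁻¹) = (∏ i : Fin (n+1), (v i - u L))⁻¹ from Finset.prod_inv_distrib _,
      show (∏ i : Fin n, (v L - u i.castSucc)⁻¹) = (∏ i : Fin n, (v L - u i.castSucc))⁻¹ from Finset.prod_inv_distrib _]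
    field_simp

end helpers

/-- Ratio of hyperbolic Cauchy determinants at doubled argument. -/
theorem ratio_cauchy_det_doubled (N : ℕ) (lam z : Fin N → ℂ)
    (hs : ∀ j k, Complex.sinh (z k - lam j) ≠ 0)
    (hc : ∀ j k, Complex.cosh (z k - lam j) ≠ 0)
    (hlam : ∀ a b, a ≠ b →
      Complex.sinh (lam a - lam b) ≠ 0 ∧ Complex.cosh (lam a - lam b) ≠ 0)
    (hz : ∀ a b, a ≠ b →
      Complex.sinh (z a - z b) ≠ 0 ∧ Complex.cosh (z a - z b) ≠ 0) :
    Matrix.det (Matrix.of fun j k : Fin N => 1 / Complex.sinh (2 * (z k - lam j))) /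
        Matrix.det (Matrix.of fun j k : Fin N => 1 / Complex.sinh (z k - lam j)) =
      (2 : ℂ)⁻¹ ^ N *
        ((∏ a : Fin N, ∏ b ∈ Finset.Iio a,
            Complex.cosh (z a - z b) * Complex.cosh (lam a - lam b)) /
          ∏ a : Fin N, ∏ b : Fin N, Complex.cosh (z a - lam b)) := by
  have key : ∀ x y : ℂ, Complex.sinh (x - y) ≠ 0 →
      (1 : ℂ) / Complex.sinh (x - y)
        = Complex.exp x * ((2 * Complex.exp y)
            * (Complex.exp (2*x) - Complex.exp (2*y))⁻¹) := by
    intro x y hxy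
    rw [exp2_sub, one_div]
    have h1 := Complex.exp_ne_zero x
    have h2 := Complex.exp_ne_zero y
    field_simp
  have hs2 : ∀ j k, Complex.sinh (2*z k - 2*lam j) ≠ 0 := by
    intro j k
    rw [show (2:ℂ)*z k - 2*lam j = 2*(z k - lam j) by ring, Complex.sinh_two_mul]
    exact mul_ne_zero (mul_ne_zero two_ne_zero (hs j k)) (hc j k)
  have hvu : ∀ j k : Fin N, Complex.exp (2*z k) - Complex.exp (2*lam j) ≠ 0 := by
    intro j k
    rw [exp2_sub]
    exact mul_ne_zero (mul_ne_zero (mul_ne_zero two_ne_zero (Complex.exp_ne_zero _))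
      (Complex.exp_ne_zero _)) (hs j k)
  have hvu2 : ∀ j k : Fin N,
      Complex.exp (2*(2*z k)) - Complex.exp (2*(2*lam j)) ≠ 0 := by
    intro j k
    rw [exp2_sub]
    exact mul_ne_zero (mul_ne_zero (mul_ne_zero two_ne_zero (Complex.exp_ne_zero _))
      (Complex.exp_ne_zero _)) (hs2 j k)
  -- determinant of the simple Cauchy matrix
  have hCB : Matrix.det (Matrix.of fun j k : Fin N =>
        (Complex.exp (2*z k) - Complex.exp (2*lam j))⁻¹)
      = (∏ a, ∏ b ∈ Iio a, ((Complex.exp (2*z a) - Complex.exp (2*z b))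
            * (Complex.exp (2*lam b) - Complex.exp (2*lam a))))
        / (∏ j, ∏ k, (Complex.exp (2*z k) - Complex.exp (2*lam j))) :=
    cauchy_det N _ _ hvu
  have hCA : Matrix.det (Matrix.of fun j k : Fin N =>
        (Complex.exp (2*(2*z k)) - Complex.exp (2*(2*lam j)))⁻¹)
      = (∏ a, ∏ b ∈ Iio a, ((Complex.exp (2*(2*z a)) - Complex.exp (2*(2*z b)))
            * (Complex.exp (2*(2*lam b)) - Complex.exp (2*(2*lam a)))))
        / (∏ j, ∏ k, (Complex.exp (2*(2*z k)) - Complex.exp (2*(2*lam j)))) :=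
    cauchy_det N _ _ hvu2
  -- matrix factorizations
  have hMB : (Matrix.of fun j k : Fin N => 1 / Complex.sinh (z k - lam j))
      = Matrix.of fun j k : Fin N => Complex.exp (z k) *
          ((Matrix.of fun j k : Fin N => (2 * Complex.exp (lam j)) *
            ((Matrix.of fun j k : Fin N =>
              (Complex.exp (2*z k) - Complex.exp (2*lam j))⁻¹) j k)) j k) := by
    ext j k
    simp only [Matrix.of_apply]
    exact key (z k) (lam j) (hs j k)
  have hMA : (Matrix.of fun j k : Fin N => 1 / Complex.sinh (2 * (z k - lam j)))
      = Matrix.of fun j k : Fin N => Complex.exp (2*z k) *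
          ((Matrix.of fun j k : Fin N => (2 * Complex.exp (2*lam j)) *
            ((Matrix.of fun j k : Fin N =>
              (Complex.exp (2*(2*z k)) - Complex.exp (2*(2*lam j)))⁻¹) j k)) j k) := by
    ext j k
    simp only [Matrix.of_apply]
    rw [show (2:ℂ)*(z k - lam j) = 2*z k - 2*lam j by ring]
    exact key (2*z k) (2*lam j) (hs2 j k)
  -- numerator of the doubled Cauchy determinant
  have hNumA : (∏ a, ∏ b ∈ Iio a, ((Complex.exp (2*(2*z a)) - Complex.exp (2*(2*z b)))
          * (Complex.exp (2*(2*lam b)) - Complex.exp (2*(2*lam a)))))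
      = (∏ a, ∏ b ∈ Iio a, ((Complex.exp (2*z a) - Complex.exp (2*z b))
            * (Complex.exp (2*lam b) - Complex.exp (2*lam a))))
        * (((∏ a, (2 * (Complex.exp (z a) * Complex.exp (lam a)))) ^ (N-1))
            * (∏ a, ∏ b ∈ Iio a,
                (Complex.cosh (z a - z b) * Complex.cosh (lam a - lam b)))) := by
    rw [← prod_pair N (fun a => 2 * (Complex.exp (z a) * Complex.exp (lam a))),
      ← Finset.prod_mul_distrib, ← Finset.prod_mul_distrib]
    refine Finset.prod_congr rfl fun a _ => ?_
    rw [← Finset.prod_mul_distrib, ← Finset.prod_mul_distrib]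
    refine Finset.prod_congr rfl fun b _ => ?_
    have ev : ∀ x : ℂ, Complex.exp (2*(2*x)) = Complex.exp (2*x) * Complex.exp (2*x) :=
      fun x => by rw [show (2:ℂ)*(2*x) = 2*x+2*x by ring, Complex.exp_add]
    have h1 := exp2_add (z a) (z b)
    have h2 := exp2_add (lam a) (lam b)
    rw [ev, ev, ev, ev]
    linear_combination
      ((Complex.exp (2*z a) - Complex.exp (2*z b))
        * (Complex.exp (2*lam b) - Complex.exp (2*lam a))
        * (Complex.exp (2*lam a) + Complex.exp (2*lam b))) * h1
      + ((Complex.exp (2*z a) - Complex.exp (2*z b))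
          * (Complex.exp (2*lam b) - Complex.exp (2*lam a))
          * (2 * Complex.exp (z a) * Complex.exp (z b) * Complex.cosh (z a - z b))) * h2
  -- denominator of the doubled Cauchy determinant
  have hDenA : (∏ j, ∏ k, (Complex.exp (2*(2*z k)) - Complex.exp (2*(2*lam j))))
      = (∏ j, ∏ k, (Complex.exp (2*z k) - Complex.exp (2*lam j)))
        * ((∏ j, ∏ k, (2 * (Complex.exp (z k) * Complex.exp (lam j))))
            * (∏ j, ∏ k, Complex.cosh (z k - lam j))) := by
    rw [← Finset.prod_mul_distrib, ← Finset.prod_mul_distrib]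
    refine Finset.prod_congr rfl fun j _ => ?_
    rw [← Finset.prod_mul_distrib, ← Finset.prod_mul_distrib]
    refine Finset.prod_congr rfl fun k _ => ?_
    have ev : ∀ x : ℂ, Complex.exp (2*(2*x)) = Complex.exp (2*x) * Complex.exp (2*x) :=
      fun x => by rw [show (2:ℂ)*(2*x) = 2*x+2*x by ring, Complex.exp_add]
    rw [ev, ev]
    linear_combination
      (Complex.exp (2*z k) - Complex.exp (2*lam j)) * exp2_add (z k) (lam j)
  -- reduce exponential products to E and Lp
  have h1 : (∏ k, Complex.exp (2*z k))
      = (∏ a, Complex.exp (z a)) * (∏ a, Complex.exp (z a)) := by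
    rw [← Finset.prod_mul_distrib]
    exact Finset.prod_congr rfl fun k _ => by
      rw [show (2:ℂ)*z k = z k + z k by ring, Complex.exp_add]
  have h2 : (∏ j, (2 * Complex.exp (2*lam j)))
      = 2^N * ((∏ a, Complex.exp (lam a)) * (∏ a, Complex.exp (lam a))) := by
    rw [Finset.prod_mul_distrib, Finset.prod_const, Finset.card_univ, Fintype.card_fin,
      ← Finset.prod_mul_distrib]
    congr 1
    exact Finset.prod_congr rfl fun j _ => by
      rw [show (2:ℂ)*lam j = lam j + lam j by ring, Complex.exp_add]
  have h3 : (∏ a, (2 * (Complex.exp (z a) * Complex.exp (lam a))))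
      = 2^N * ((∏ a, Complex.exp (z a)) * (∏ a, Complex.exp (lam a))) := by
    rw [Finset.prod_mul_distrib, Finset.prod_const, Finset.card_univ, Fintype.card_fin,
      Finset.prod_mul_distrib]
  have h4 : (∏ j, (2 * Complex.exp (lam j))) = 2^N * (∏ a, Complex.exp (lam a)) := by
    rw [Finset.prod_mul_distrib, Finset.prod_const, Finset.card_univ, Fintype.card_fin]
  have h5 : (∏ j, ∏ k, (2 * (Complex.exp (z k) * Complex.exp (lam j))))
      = (2^N)^N * ((∏ a, Complex.exp (z a))^N * (∏ a, Complex.exp (lam a))^N) := by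
    simp only [Finset.prod_mul_distrib, Finset.prod_const, Finset.card_univ,
      Fintype.card_fin, Finset.prod_pow]
  -- nonvanishing
  have hEne : (∏ a, Complex.exp (z a)) ≠ 0 := Finset.prod_ne_zero_iff.mpr fun a _ => Complex.exp_ne_zero _
  have hLne : (∏ a, Complex.exp (lam a)) ≠ 0 := Finset.prod_ne_zero_iff.mpr fun a _ => Complex.exp_ne_zero _
  have hNB : (∏ a, ∏ b ∈ Iio a, ((Complex.exp (2*z a) - Complex.exp (2*z b))
        * (Complex.exp (2*lam b) - Complex.exp (2*lam a)))) ≠ 0 := by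
    refine Finset.prod_ne_zero_iff.mpr fun a _ => Finset.prod_ne_zero_iff.mpr fun b hb => ?_
    have hba : b < a := Finset.mem_Iio.mp hb
    refine mul_ne_zero ?_ ?_
    · rw [exp2_sub]
      exact mul_ne_zero (mul_ne_zero (mul_ne_zero two_ne_zero (Complex.exp_ne_zero _))
        (Complex.exp_ne_zero _)) (hz a b hba.ne').1
    · rw [exp2_sub]
      exact mul_ne_zero (mul_ne_zero (mul_ne_zero two_ne_zero (Complex.exp_ne_zero _))
        (Complex.exp_ne_zero _)) (hlam b a hba.ne).1
  have hDB : (∏ j, ∏ k, (Complex.exp (2*z k) - Complex.exp (2*lam j))) ≠ 0 :=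
    Finset.prod_ne_zero_iff.mpr fun j _ =>
      Finset.prod_ne_zero_iff.mpr fun k _ => hvu j k
  have hPc : (∏ a, ∏ b ∈ Iio a,
      (Complex.cosh (z a - z b) * Complex.cosh (lam a - lam b))) ≠ 0 := by
    refine Finset.prod_ne_zero_iff.mpr fun a _ => Finset.prod_ne_zero_iff.mpr fun b hb => ?_
    have hba : b < a := Finset.mem_Iio.mp hb
    exact mul_ne_zero (hz a b hba.ne').2 (hlam a b hba.ne').2
  have hQc : (∏ j, ∏ k, Complex.cosh (z k - lam j)) ≠ 0 :=
    Finset.prod_ne_zero_iff.mpr fun j _ =>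
      Finset.prod_ne_zero_iff.mpr fun k _ => hc j k
  have hcomm : (∏ a : Fin N, ∏ b : Fin N, Complex.cosh (z a - lam b))
      = ∏ j, ∏ k, Complex.cosh (z k - lam j) := Finset.prod_comm
  -- abbreviations
  set E := (∏ a, Complex.exp (z a)) with hEdef
  set Lp := (∏ a, Complex.exp (lam a)) with hLpdef
  set NB := (∏ a, ∏ b ∈ Iio a, ((Complex.exp (2*z a) - Complex.exp (2*z b))
      * (Complex.exp (2*lam b) - Complex.exp (2*lam a)))) with hNBdef
  set DB := (∏ j, ∏ k, (Complex.exp (2*z k) - Complex.exp (2*lam j))) with hDBdef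
  set Pc := (∏ a, ∏ b ∈ Iio a,
      (Complex.cosh (z a - z b) * Complex.cosh (lam a - lam b))) with hPcdef
  set Qc := (∏ j, ∏ k, Complex.cosh (z k - lam j)) with hQcdef
  -- put everything together
  rw [hMA, hMB, Matrix.det_mul_row, Matrix.det_mul_column,
    Matrix.det_mul_row, Matrix.det_mul_column, hCA, hCB, hNumA, hDenA, hcomm,
    h1, h2, h3, h4, h5]
  obtain _ | m := N
  · simp [hEdef, hLpdef, hNBdef, hDBdef, hPcdef, hQcdef]
  · simp only [Nat.add_sub_cancel]
    rw [← hEdef]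
    have hq : ((2:ℂ))^(m+1) ≠ 0 := pow_ne_zero _ two_ne_zero
    have hdB : E * (2 ^ (m+1) * Lp * (NB / DB)) ≠ 0 :=
      mul_ne_zero hEne (mul_ne_zero (mul_ne_zero hq hLne) (div_ne_zero hNB hDB))
    have hW : DB * (((2:ℂ)^(m+1))^(m+1) * (E^(m+1) * Lp^(m+1)) * Qc) ≠ 0 :=
      mul_ne_zero hDB (mul_ne_zero (mul_ne_zero (pow_ne_zero _ hq)
        (mul_ne_zero (pow_ne_zero _ hEne) (pow_ne_zero _ hLne))) hQc)
    rw [div_eq_iff hdB, inv_pow, div_eq_mul_inv, div_eq_mul_inv, div_eq_mul_inv]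
    have hWinv := mul_inv_cancel₀ hW
    have hQinv := mul_inv_cancel₀ hQc
    have hDinv := mul_inv_cancel₀ hDB
    have hqinv := mul_inv_cancel₀ hq
    linear_combination
      (NB*Pc*E*Lp*Qc⁻¹*DB⁻¹) * hWinv
      - (NB*Pc*E*Lp*((2:ℂ)^(m+1))^(m+1)*E^(m+1)*Lp^(m+1)
          * (DB * (((2:ℂ)^(m+1))^(m+1) * (E^(m+1) * Lp^(m+1)) * Qc))⁻¹) * hQinv
      - (NB*Pc*E*Lp*((2:ℂ)^(m+1))^(m+1)*E^(m+1)*Lp^(m+1)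
          * (DB * (((2:ℂ)^(m+1))^(m+1) * (E^(m+1) * Lp^(m+1)) * Qc))⁻¹ * Qc⁻¹ * Qc) * hDinv
      - (NB*Pc*E*Lp*Qc⁻¹*DB⁻¹) * hqinv
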